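/- Let B ∈ gl_n(ℝ) satisfy [B,[B,Bᵗ]] = c·B for some nonzero real number c. Then tr(Bᵏ) = 0 for all k ≥ 1; in particular B is nilpotent. -/

import Mathlib

open Matrix Filter

noncomputable section

abbrev Mat (n : ℕ) := Matrix (Fin n) (Fin n) ℝ

/-- Commutator bracket of matrices. -/
def bkt {n : ℕ} (X Y : Mat n) : Mat n := X * Y - Y * X

/-- Frobenius inner product ⟨X,Y⟩ = tr(XYᵗ). -/
def frob {n : ℕ} (X Y : Mat n) : ℝ := Matrix.trace (X * Yᵀ)

/-- Squared Frobenius norm ‖X‖² = tr(XXᵗ). -/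
def sqnorm {n : ℕ} (X : Mat n) : ℝ := frob X X

/-- Symmetric part S(X) = (X+Xᵗ)/2. -/
def symPart {n : ℕ} (X : Mat n) : Mat n := (1/2 : ℝ) • (X + Xᵀ)

/-- Right-hand side of the bracket flow ODE. -/
def rhs {n : ℕ} (A : Mat n) : Mat n :=
  (-(Matrix.trace (symPart A * symPart A))) • A
    + (1/2 : ℝ) • bkt A (bkt A Aᵀ)
    - ((1/2 : ℝ) * Matrix.trace A) • bkt A Aᵀ

open Polynomial in
lemma aux_vdm (t : Finset ℂ) (w : ℂ → ℂ) (hw : ∀ μ ∈ t, w μ ≠ 0) (h0 : ∀ μ ∈ t, μ ≠ 0)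
    (h : ∀ k : ℕ, 1 ≤ k → ∑ μ ∈ t, w μ * μ ^ k = 0) : t = ∅ := by
  by_contra hne
  obtain ⟨μ₀, hμ₀⟩ := Finset.nonempty_of_ne_empty hne
  set p : ℂ[X] := ∏ ν ∈ t.erase μ₀, (X - C ν) with hp
  have key : ∑ μ ∈ t, w μ * μ * p.eval μ = 0 := by
    have h1 : ∀ μ ∈ t, w μ * μ * p.eval μ
        = ∑ j ∈ Finset.range (p.natDegree + 1), p.coeff j * (w μ * μ ^ (j+1)) := by
      intro μ _
      rw [eval_eq_sum_range, Finset.mul_sum]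
      exact Finset.sum_congr rfl fun j _ => by ring
    rw [Finset.sum_congr rfl h1, Finset.sum_comm]
    refine Finset.sum_eq_zero fun j _ => ?_
    rw [← Finset.mul_sum, h (j+1) (by omega), mul_zero]
  rw [Finset.sum_eq_single_of_mem μ₀ hμ₀ (fun μ hμ hne' => by
    have : p.eval μ = 0 := by
      rw [hp, eval_prod]
      exact Finset.prod_eq_zero (Finset.mem_erase.mpr ⟨hne', hμ⟩) (by simp)
    simp [this])] at key
  have hpe : p.eval μ₀ ≠ 0 := by
    rw [hp, eval_prod]
    refine Finset.prod_ne_zero_iff.mpr fun ν hν => ?_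
    have hne' := (Finset.mem_erase.mp hν).1
    simpa using sub_ne_zero.mpr (Ne.symm hne')
  exact (mul_ne_zero (mul_ne_zero (hw μ₀ hμ₀) (h0 μ₀ hμ₀)) hpe) key

/-- Trace of a power of an endomorphism which is `μ • 1` plus a nilpotent. -/
lemma aux_trace_pow {V : Type} [AddCommGroup V] [Module ℂ V] [FiniteDimensional ℂ V]
    (g : Module.End ℂ V) (μ : ℂ) (hn : IsNilpotent (g - μ • (1 : Module.End ℂ V))) (k : ℕ) :
    LinearMap.trace ℂ V (g ^ k) = μ ^ k * (Module.finrank ℂ V : ℂ) := by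
  set N : Module.End ℂ V := g - μ • 1 with hN
  have hg : g = μ • 1 + N := by rw [hN]; abel
  have hcomm : Commute (μ • (1 : Module.End ℂ V)) N := (Commute.one_left N).smul_left μ
  rw [hg, hcomm.add_pow, map_sum, Finset.sum_eq_single k]
  · simp [smul_pow, LinearMap.trace_one, mul_comm]
  · intro i hi hik
    have hik' : i < k := by
      have := Finset.mem_range.mp hi
      omega
    have hnilN : IsNilpotent (N ^ (k - i)) := hn.pow_of_pos (by omega)
    have hc1 : Commute ((μ • (1 : Module.End ℂ V)) ^ i) (N ^ (k - i)) :=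
      (hcomm.pow_pow i (k - i))
    have hnil2 : IsNilpotent ((μ • (1 : Module.End ℂ V)) ^ i * N ^ (k - i)) :=
      hc1.isNilpotent_mul_left hnilN
    have hc2 : Commute ((μ • (1 : Module.End ℂ V)) ^ i * N ^ (k - i))
        ((k.choose i : Module.End ℂ V)) := (Nat.cast_commute _ _).symm
    have hnil3 : IsNilpotent ((μ • (1 : Module.End ℂ V)) ^ i * N ^ (k - i)
        * (k.choose i : Module.End ℂ V)) := hc2.isNilpotent_mul_right hnil2
    exact (LinearMap.isNilpotent_trace_of_isNilpotent hnil3).eq_zero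
  · intro hk
    simp at hk

open Module in
lemma aux_end_nilpotent {V : Type} [AddCommGroup V] [Module ℂ V] [FiniteDimensional ℂ V]
    (φ : Module.End ℂ V) (h : ∀ k : ℕ, 1 ≤ k → LinearMap.trace ℂ V (φ ^ k) = 0) :
    IsNilpotent φ := by
  have hindep := φ.independent_maxGenEigenspace
  have htop := Module.End.iSup_maxGenEigenspace_eq_top φ
  have hds := DirectSum.isInternal_submodule_of_iSupIndep_of_iSup_eq_top hindep htop
  have hfin : {μ : ℂ | φ.maxGenEigenspace μ ≠ ⊥}.Finite :=
    WellFoundedGT.finite_ne_bot_of_iSupIndep hindep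
  have hmapsto : ∀ μ : ℂ, Set.MapsTo φ (φ.maxGenEigenspace μ) (φ.maxGenEigenspace μ) :=
    fun μ => φ.mapsTo_maxGenEigenspace_of_comm rfl μ
  have hmapsk : ∀ (k : ℕ) (μ : ℂ),
      Set.MapsTo (φ ^ k) (φ.maxGenEigenspace μ) (φ.maxGenEigenspace μ) :=
    fun k μ => φ.mapsTo_maxGenEigenspace_of_comm (Commute.pow_right rfl k) μ
  have hnil : ∀ μ : ℂ, IsNilpotent (φ.restrict (hmapsto μ) - μ • 1) := by
    intro μ
    have h1 := φ.isNilpotent_restrict_maxGenEigenspace_sub_algebraMap μ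
    have h2 : (φ - algebraMap ℂ (Module.End ℂ V) μ).restrict
        (Module.End.mapsTo_maxGenEigenspace_of_comm
          (Algebra.mul_sub_algebraMap_commutes φ μ) μ)
        = φ.restrict (hmapsto μ) - μ • 1 := by
      ext x
      show (φ - algebraMap ℂ (Module.End ℂ V) μ) (x : V) = φ x - μ • (x : V)
      rw [LinearMap.sub_apply, Module.algebraMap_end_apply]
    rwa [h2] at h1
  have key : ∀ k : ℕ, 1 ≤ k →
      ∑ μ ∈ hfin.toFinset, ((finrank ℂ (φ.maxGenEigenspace μ) : ℂ)) * μ ^ k = 0 := by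
    intro k hk
    have ht := LinearMap.trace_eq_sum_trace_restrict' hds hfin (hmapsk k)
    rw [h k hk] at ht
    have hterm : ∀ μ ∈ hfin.toFinset,
        LinearMap.trace ℂ _ ((φ ^ k).restrict (hmapsk k μ))
          = ((finrank ℂ (φ.maxGenEigenspace μ) : ℂ)) * μ ^ k := by
      intro μ _
      have hres : (φ ^ k).restrict (hmapsk k μ) = (φ.restrict (hmapsto μ)) ^ k :=
        (Module.End.pow_restrict k (hmapsto μ)).symm
      rw [hres, aux_trace_pow _ μ (hnil μ) k, mul_comm]
    rw [Finset.sum_congr rfl hterm] at ht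
    exact ht.symm
  have herase : hfin.toFinset.erase 0 = ∅ := by
    apply aux_vdm _ (fun μ => (finrank ℂ (φ.maxGenEigenspace μ) : ℂ))
    · intro μ hμ
      have hμ' : φ.maxGenEigenspace μ ≠ ⊥ := by
        simpa using (Finset.mem_erase.mp hμ).2
      have hnt : Nontrivial (φ.maxGenEigenspace μ) := Submodule.nontrivial_iff_ne_bot.mpr hμ'
      have : 0 < finrank ℂ (φ.maxGenEigenspace μ) := Module.finrank_pos
      exact_mod_cast this.ne'
    · exact fun μ hμ => (Finset.mem_erase.mp hμ).1
    · intro k hk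
      rw [Finset.sum_erase _ (by simp [zero_pow (by omega : k ≠ 0)])]
      exact key k hk
  have hW0 : φ.maxGenEigenspace 0 = ⊤ := by
    rw [eq_top_iff, ← htop]
    refine iSup_le fun μ => ?_
    rcases eq_or_ne μ 0 with rfl | hμ
    · exact le_rfl
    · have : φ.maxGenEigenspace μ = ⊥ := by
        by_contra hb
        have : μ ∈ hfin.toFinset.erase 0 := by
          rw [Finset.mem_erase]
          exact ⟨hμ, by simpa using hb⟩
        simp [herase] at this
      rw [this]
      exact bot_le
  refine ((LinearMap.charpoly_nilpotent_tfae φ).out 2 0).mp fun m => ?_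
  have hm : m ∈ φ.maxGenEigenspace 0 := hW0 ▸ Submodule.mem_top
  rw [Module.End.mem_maxGenEigenspace] at hm
  obtain ⟨k, hk⟩ := hm
  exact ⟨k, by simpa using hk⟩

/-- A complex matrix all of whose power traces vanish is nilpotent. -/
lemma aux_mat_nilpotent {m : ℕ} (A : Matrix (Fin m) (Fin m) ℂ)
    (h : ∀ k : ℕ, 1 ≤ k → Matrix.trace (A ^ k) = 0) : IsNilpotent A := by
  have hφ : IsNilpotent (Matrix.toLinAlgEquiv' A) := by
    apply aux_end_nilpotent
    intro k hk
    rw [← map_pow, LinearMap.trace_eq_matrix_trace ℂ (Pi.basisFun ℂ (Fin m)),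
      LinearMap.toMatrix_eq_toMatrix']
    have : LinearMap.toMatrix' (Matrix.toLinAlgEquiv' (A ^ k)) = A ^ k :=
      LinearMap.toMatrix'_toLin' (A ^ k)
    rw [this]
    exact h k hk
  have := hφ.map (Matrix.toLinAlgEquiv'.symm : _ ≃ₐ[ℂ] Matrix (Fin m) (Fin m) ℂ)
  simpa using this

/-- A real matrix all of whose power traces vanish is nilpotent. -/
lemma aux_real_nilpotent {m : ℕ} (B : Mat m)
    (h : ∀ k : ℕ, 1 ≤ k → Matrix.trace (B ^ k) = 0) : IsNilpotent B := by
  set f : Mat m →+* Matrix (Fin m) (Fin m) ℂ := (algebraMap ℝ ℂ).mapMatrix with hf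
  have hA : ∀ k : ℕ, 1 ≤ k → Matrix.trace ((f B) ^ k) = 0 := by
    intro k hk
    rw [← map_pow]
    have : Matrix.trace (f (B ^ k)) = algebraMap ℝ ℂ (Matrix.trace (B ^ k)) := by
      simp [hf, Matrix.trace, RingHom.mapMatrix_apply, Matrix.diag, map_sum]
    rw [this, h k hk, map_zero]
  obtain ⟨k, hk⟩ := aux_mat_nilpotent (f B) hA
  refine ⟨k, ?_⟩
  rw [← map_pow] at hk
  ext i j
  have h2 : algebraMap ℝ ℂ ((B ^ k) i j) = 0 := by
    have h3 := congrArg (fun M : Matrix (Fin m) (Fin m) ℂ => M i j) hk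
    simpa [hf, RingHom.mapMatrix_apply, Matrix.map_apply] using h3
  simpa using h2

theorem stmt3 {n : ℕ} (B : Mat n) (c : ℝ) (hc : c ≠ 0)
    (h : bkt B (bkt B Bᵀ) = c • B) :
    (∀ k : ℕ, 1 ≤ k → Matrix.trace (B ^ k) = 0) ∧ IsNilpotent B := by
  have htr : ∀ k : ℕ, 1 ≤ k → Matrix.trace (B ^ k) = 0 := by
    intro k hk
    obtain ⟨j, rfl⟩ : ∃ j, k = j + 1 := ⟨k - 1, by omega⟩
    set M := bkt B Bᵀ with hM
    have h1 : Matrix.trace ((B * M - M * B) * B ^ j) = 0 := by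
      rw [Matrix.sub_mul, Matrix.trace_sub, Matrix.mul_assoc,
        Matrix.trace_mul_comm B (M * B ^ j), Matrix.mul_assoc, Matrix.mul_assoc,
        ← pow_succ, ← pow_succ', sub_self]
    have h2 : B * M - M * B = c • B := h
    rw [h2, Matrix.smul_mul, Matrix.trace_smul, ← pow_succ', smul_eq_mul] at h1
    exact (mul_eq_zero.mp h1).resolve_left hc
  exact ⟨htr, aux_real_nilpotent B htr⟩
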